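/- Let p be a prime and f : ℕ → ℕ. For all k, n ∈ ℕ, writing n₀ = n mod p and k₀ = k mod p, one has binom(k,n)_f ≡ ∑_{m=0}^{⌊n/p⌋} binom(⌊k/p⌋, ⌊n/p⌋ − m)_f · binom(k₀, n₀ + m·p)_f (mod p). -/

import Mathlib

/-- The extended binomial coefficient `binom(k,n)_f`: the sum, over all
`k`-tuples `(π₁,…,π_k)` of nonnegative integers with `π₁ + ⋯ + π_k = n`,
of the products `f(π₁)⋯f(π_k)`. It counts the `f`-weighted integer
compositions of `n` with exactly `k` parts. -/
def extBinom (f : ℕ → ℕ) (k n : ℕ) : ℕ :=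
  ∑ π ∈ Finset.Nat.antidiagonalTuple k n, ∏ i, f (π i)

lemma extBinom_zero (f : ℕ → ℕ) (m : ℕ) :
    extBinom f 0 m = if m = 0 then 1 else 0 := by
  rcases m with _ | m <;>
    simp [extBinom, Finset.Nat.antidiagonalTuple_zero_zero,
      Finset.Nat.antidiagonalTuple_zero_succ]

lemma extBinom_succ (f : ℕ → ℕ) (k m : ℕ) :
    extBinom f (k + 1) m =
      ∑ ab ∈ Finset.HasAntidiagonal.antidiagonal m, f ab.1 * extBinom f k ab.2 := by
  unfold extBinom
  simp_rw [Finset.mul_sum]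
  rw [Finset.sum_sigma']
  refine Finset.sum_nbij' (fun π => ⟨(π 0, ∑ i, Fin.tail π i), Fin.tail π⟩)
    (fun x => Fin.cons x.1.1 x.2) ?_ ?_ ?_ ?_ ?_
  · intro π hπ
    simp only [Finset.Nat.mem_antidiagonalTuple] at hπ
    simp only [Finset.mem_sigma, Finset.HasAntidiagonal.mem_antidiagonal,
      Finset.Nat.mem_antidiagonalTuple]
    refine ⟨?_, trivial⟩
    rw [← hπ, ← Fin.sum_cons (π 0) (Fin.tail π), Fin.cons_self_tail]
  · rintro ⟨⟨a, b⟩, π⟩ hx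
    simp only [Finset.mem_sigma, Finset.HasAntidiagonal.mem_antidiagonal,
      Finset.Nat.mem_antidiagonalTuple] at hx ⊢
    rw [Fin.sum_cons, hx.2, hx.1]
  · intro π hπ
    simp [Fin.cons_self_tail]
  · rintro ⟨⟨a, b⟩, π⟩ hx
    simp only [Finset.mem_sigma, Finset.HasAntidiagonal.mem_antidiagonal,
      Finset.Nat.mem_antidiagonalTuple] at hx
    simp only [Fin.cons_zero, Fin.tail_cons]
    congr 2
    simp [hx.2]
  · intro π hπ
    simp [Fin.prod_univ_succ, Fin.tail]

/-- The auxiliary polynomial `∑_{i ≤ n} f i • X^i` over `ZMod p`. -/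
noncomputable def extBinomAuxP (p : ℕ) (f : ℕ → ℕ) (n : ℕ) : Polynomial (ZMod p) :=
  ∑ i ∈ Finset.range (n + 1), Polynomial.monomial i (f i : ZMod p)

lemma extBinomAuxP_coeff (p : ℕ) (f : ℕ → ℕ) (n m : ℕ) (h : m ≤ n) :
    (extBinomAuxP p f n).coeff m = (f m : ZMod p) := by
  unfold extBinomAuxP
  rw [Polynomial.finset_sum_coeff]
  simp_rw [Polynomial.coeff_monomial]
  rw [Finset.sum_ite_eq' (Finset.range (n + 1)) m (fun i => (f i : ZMod p)),
    if_pos (Finset.mem_range.2 (by omega))]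

lemma extBinomAuxP_coeff_pow (p : ℕ) (f : ℕ → ℕ) (n : ℕ) :
    ∀ k m, m ≤ n → ((extBinomAuxP p f n) ^ k).coeff m = (extBinom f k m : ZMod p) := by
  intro k
  induction k with
  | zero =>
    intro m _
    rw [pow_zero, Polynomial.coeff_one, extBinom_zero]
    split_ifs <;> simp
  | succ k ih =>
    intro m hm
    rw [pow_succ', Polynomial.coeff_mul, extBinom_succ]
    push_cast
    refine Finset.sum_congr rfl fun ab hab => ?_
    have h := Finset.HasAntidiagonal.mem_antidiagonal.1 hab
    rw [extBinomAuxP_coeff p f n ab.1 (by omega), ih ab.2 (by omega)]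

theorem extBinom_granville (p : ℕ) (hp : p.Prime) (f : ℕ → ℕ) (k n : ℕ) :
    extBinom f k n ≡
      ∑ m ∈ Finset.range (n / p + 1),
        extBinom f (k / p) (n / p - m) * extBinom f (k % p) (n % p + m * p)
      [MOD p] := by
  haveI : Fact p.Prime := ⟨hp⟩
  have hp0 : 0 < p := hp.pos
  rw [← ZMod.natCast_eq_natCast_iff]
  set P := extBinomAuxP p f n with hP
  have key : P ^ k = Polynomial.expand (ZMod p) p (P ^ (k / p)) * P ^ (k % p) := by
    conv_lhs => rw [← Nat.div_add_mod k p]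
    rw [pow_add, pow_mul']
    congr 1
    rw [← Polynomial.map_frobenius_expand p (P ^ (k / p)), ZMod.frobenius_zmod, Polynomial.map_id]
  have h1 : ((extBinom f k n : ℕ) : ZMod p) = (P ^ k).coeff n :=
    (extBinomAuxP_coeff_pow p f n k n le_rfl).symm
  rw [h1, key, Polynomial.coeff_mul]
  have h2 : ∀ ab ∈ Finset.HasAntidiagonal.antidiagonal n,
      (Polynomial.expand (ZMod p) p (P ^ (k / p))).coeff ab.1 * (P ^ (k % p)).coeff ab.2
      = (if p ∣ ab.1 then (extBinom f (k / p) (ab.1 / p) : ZMod p) else 0) *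
        (extBinom f (k % p) ab.2 : ZMod p) := by
    intro ab hab
    have h := Finset.HasAntidiagonal.mem_antidiagonal.1 hab
    rw [Polynomial.coeff_expand hp0,
      extBinomAuxP_coeff_pow p f n _ ab.2 (by omega)]
    congr 1
    split_ifs with hd
    · exact extBinomAuxP_coeff_pow p f n _ _
        (le_trans (Nat.div_le_self _ _) (by omega))
    · rfl
  rw [Finset.sum_congr rfl h2]
  simp_rw [ite_mul, zero_mul]
  push_cast
  rw [← Finset.sum_filter (fun ab : ℕ × ℕ => p ∣ ab.1)
    (fun ab => ((extBinom f (k / p) (ab.1 / p) : ZMod p)) * (extBinom f (k % p) ab.2 : ZMod p))]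
  refine Finset.sum_nbij' (fun ab => n / p - ab.1 / p)
    (fun m => (p * (n / p - m), n % p + m * p)) ?_ ?_ ?_ ?_ ?_
  · intro ab _
    simp only [Finset.mem_range, Nat.lt_succ_iff]
    exact Nat.sub_le _ _
  · intro m hm
    have hm' : m ≤ n / p := Nat.lt_succ_iff.1 (Finset.mem_range.1 hm)
    simp only [Finset.mem_filter, Finset.HasAntidiagonal.mem_antidiagonal]
    constructor
    · have e1 : p * (n / p - m) = p * (n / p) - p * m := Nat.mul_sub p (n/p) m
      have e2 : p * m ≤ p * (n / p) := Nat.mul_le_mul_left p hm'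
      have e3 : p * (n / p) + n % p = n := Nat.div_add_mod n p
      have e4 : m * p = p * m := Nat.mul_comm m p
      omega
    · exact Dvd.intro _ rfl
  · intro ab hab
    simp only [Finset.mem_filter, Finset.HasAntidiagonal.mem_antidiagonal] at hab
    obtain ⟨hsum, c, hc⟩ := hab
    have hc1 : ab.1 / p = c := by rw [hc, Nat.mul_div_cancel_left c hp0]
    have hcle : c ≤ n / p := by
      rw [← hc1]; exact Nat.div_le_div_right (by omega)
    have e3 : p * (n / p) + n % p = n := Nat.div_add_mod n p
    have hc2 : n / p - (n / p - c) = c := by omega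
    have e1 : p * (n / p - (n / p - c)) = p * c := by rw [hc2]
    have e5 : (n / p - c) * p = (n / p) * p - c * p := Nat.sub_mul _ _ _
    have e6 : (n / p) * p = p * (n / p) := Nat.mul_comm _ _
    have e7 : c * p = p * c := Nat.mul_comm _ _
    have e8 : c * p ≤ (n / p) * p := Nat.mul_le_mul_right p hcle
    have : (p * (n / p - (n / p - ab.1 / p)), n % p + (n / p - ab.1 / p) * p) = ab := by
      rw [hc1]
      have : n % p + (n / p - c) * p = ab.2 := by omega
      rw [e1, this, ← hc]
    exact this
  · intro m hm
    have hm' : m ≤ n / p := Nat.lt_succ_iff.1 (Finset.mem_range.1 hm)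
    simp only
    rw [Nat.mul_div_cancel_left _ hp0]
    omega
  · intro ab hab
    simp only [Finset.mem_filter, Finset.HasAntidiagonal.mem_antidiagonal] at hab
    obtain ⟨hsum, c, hc⟩ := hab
    have hc1 : ab.1 / p = c := by rw [hc, Nat.mul_div_cancel_left c hp0]
    have hcle : c ≤ n / p := by
      rw [← hc1]; exact Nat.div_le_div_right (by omega)
    have e3 : p * (n / p) + n % p = n := Nat.div_add_mod n p
    have e5 : (n / p - c) * p = (n / p) * p - c * p := Nat.sub_mul _ _ _
    have e6 : (n / p) * p = p * (n / p) := Nat.mul_comm _ _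
    have e7 : c * p = p * c := Nat.mul_comm _ _
    have e8 : c * p ≤ (n / p) * p := Nat.mul_le_mul_right p hcle
    have h1 : ab.1 / p = n / p - (n / p - ab.1 / p) := by rw [hc1]; omega
    have h2 : ab.2 = n % p + (n / p - ab.1 / p) * p := by rw [hc1]; omega
    rw [← h1, ← h2]
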